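/- For a connected graph G on n ≥ 2 vertices, the second smallest distance Laplacian eigenvalue satisfies ∂^L_{n-1}(G) ≥ n, i.e., every nonzero eigenvalue of D^L(G) is at least n. -/
import Mathlib


open Polynomial

/-- The distance Laplacian matrix `D^L(G) = Tr(G) - D(G)` of a graph `G`. -/
noncomputable def distLap {V : Type*} [Fintype V] [DecidableEq V] (G : SimpleGraph V) :
    Matrix V V ℝ :=
  Matrix.diagonal (fun v => ∑ u, (G.dist v u : ℝ)) - Matrix.of (fun u v => (G.dist u v : ℝ))

/-- A real root of the characteristic polynomial admits a real eigenvector. -/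
lemma exists_eigvec {n : Type*} [Fintype n] [DecidableEq n] (M : Matrix n n ℝ) {μ : ℝ}
    (h : M.charpoly.IsRoot μ) : ∃ v ≠ 0, M.mulVec v = μ • v := by
  have hdet : (μ • (1 : Matrix n n ℝ) - M).det = 0 := by
    rw [Polynomial.IsRoot, Matrix.charpoly, ← Polynomial.coe_evalRingHom,
      RingHom.map_det] at h
    convert h using 2
    ext i j
    by_cases hij : i = j <;>
      simp [Matrix.charmatrix_apply, hij, Matrix.one_apply, Matrix.diagonal_apply]
  obtain ⟨v, hv0, hv⟩ := Matrix.exists_mulVec_eq_zero_iff.mpr hdet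
  refine ⟨v, hv0, ?_⟩
  have := hv
  rw [Matrix.sub_mulVec, sub_eq_zero, Matrix.smul_mulVec, Matrix.one_mulVec] at this
  exact this.symm

/-- For a connected graph `G` on `n ≥ 2` vertices, every nonzero distance Laplacian
eigenvalue is at least `n`; in particular `∂^L_{n-1}(G) ≥ n`. -/
theorem stmt15 {V : Type*} [Fintype V] [DecidableEq V] (G : SimpleGraph V)
    (hG : G.Connected) (hn : 2 ≤ Fintype.card V) :
    ∀ μ : ℝ, (distLap G).charpoly.IsRoot μ → μ ≠ 0 → (Fintype.card V : ℝ) ≤ μ := by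
  intro μ hroot hμ
  obtain ⟨x, hx0, hx⟩ := exists_eigvec (distLap G) hroot
  set d : V → V → ℝ := fun i j => (G.dist i j : ℝ) with hd
  have hdsymm : ∀ i j : V, d i j = d j i := by
    intro i j; simp only [hd]; rw [SimpleGraph.dist_comm]
  have hdself : ∀ i : V, d i i = 0 := by intro i; simp [hd]
  have hdone : ∀ i j : V, i ≠ j → (1 : ℝ) ≤ d i j := by
    intro i j hij
    have : 1 ≤ G.dist i j := hG.pos_dist_of_ne hij
    simp only [hd]; exact_mod_cast this
  -- coordinatewise eigenvalue equation
  have key : ∀ i, (∑ u, d i u) * x i - ∑ j, d i j * x j = μ * x i := by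
    intro i
    have := congrFun hx i
    simpa [distLap, Matrix.mulVec, dotProduct, Matrix.sub_apply,
      Matrix.diagonal_apply, Finset.sum_sub_distrib, sub_mul, Finset.sum_ite_eq,
      Finset.mul_sum] using this
  -- the sum of coordinates vanishes
  have hS : (∑ i, x i) = 0 := by
    have h1 : ∑ i, ((∑ u, d i u) * x i - ∑ j, d i j * x j) = μ * ∑ i, x i := by
      rw [Finset.mul_sum]; exact Finset.sum_congr rfl fun i _ => key i
    have h2 : ∑ i, ((∑ u, d i u) * x i - ∑ j, d i j * x j) = 0 := by
      rw [Finset.sum_sub_distrib, sub_eq_zero]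
      rw [Finset.sum_comm]
      refine Finset.sum_congr rfl fun i _ => ?_
      rw [Finset.sum_mul]
      refine Finset.sum_congr rfl fun j _ => ?_
      rw [hdsymm j i]
    rw [h2] at h1
    rcases mul_eq_zero.mp h1.symm with h | h
    · exact absurd h hμ
    · exact h
  set N : ℝ := ∑ i, x i ^ 2 with hN
  have hNpos : 0 < N := by
    rcases Function.ne_iff.mp hx0 with ⟨i, hi⟩
    have hsq : 0 < x i ^ 2 := by
      rcases (sq_nonneg (x i)).lt_or_eq with h | h
      · exact h
      · exact absurd (pow_eq_zero_iff two_ne_zero |>.mp h.symm) hi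
    exact Finset.sum_pos' (fun j _ => sq_nonneg _) ⟨i, Finset.mem_univ i, hsq⟩
  -- the quadratic form
  have hquad : μ * N = ∑ i, ∑ j, d i j * (x i ^ 2 - x i * x j) := by
    have : μ * N = ∑ i, x i * ((∑ u, d i u) * x i - ∑ j, d i j * x j) := by
      rw [hN, Finset.mul_sum]
      refine Finset.sum_congr rfl fun i _ => ?_
      rw [key i]; ring
    rw [this]
    refine Finset.sum_congr rfl fun i _ => ?_
    rw [Finset.sum_mul, mul_sub, Finset.mul_sum, Finset.mul_sum, ← Finset.sum_sub_distrib]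
    refine Finset.sum_congr rfl fun j _ => ?_
    ring
  have hsymmform : 2 * (μ * N) = ∑ i, ∑ j, d i j * (x i - x j) ^ 2 := by
    rw [hquad]
    have hswap : ∑ i, ∑ j, d i j * (x i ^ 2 - x i * x j)
        = ∑ i, ∑ j, d i j * (x j ^ 2 - x i * x j) := by
      rw [Finset.sum_comm]
      refine Finset.sum_congr rfl fun i _ => Finset.sum_congr rfl fun j _ => ?_
      rw [hdsymm j i]; ring
    rw [two_mul]
    nth_rewrite 2 [hswap]
    rw [← Finset.sum_add_distrib]
    refine Finset.sum_congr rfl fun i _ => ?_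
    rw [← Finset.sum_add_distrib]
    refine Finset.sum_congr rfl fun j _ => ?_
    ring
  have hlower : ∑ i, ∑ j, (x i - x j) ^ 2 ≤ ∑ i, ∑ j, d i j * (x i - x j) ^ 2 := by
    refine Finset.sum_le_sum fun i _ => Finset.sum_le_sum fun j _ => ?_
    by_cases hij : i = j
    · subst hij; simp
    · nth_rewrite 1 [← one_mul ((x i - x j) ^ 2)]
      exact mul_le_mul_of_nonneg_right (hdone i j hij) (sq_nonneg _)
  have hcn : ∑ i, ∑ j, (x i - x j : ℝ) ^ 2 = 2 * (Fintype.card V : ℝ) * N := by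
    have : ∀ i j : V, (x i - x j) ^ 2 = x i ^ 2 + x j ^ 2 - 2 * (x i * x j) := by
      intro i j; ring
    simp only [this, Finset.sum_sub_distrib, Finset.sum_add_distrib]
    rw [Finset.sum_comm (f := fun i j => x j ^ 2)]
    simp only [Finset.sum_const, Finset.card_univ, nsmul_eq_mul, ← Finset.mul_sum,
      ← Finset.sum_mul]
    rw [hS, hN]; ring
  -- combine
  have : 2 * ((Fintype.card V : ℝ)) * N ≤ 2 * (μ * N) := by
    rw [hsymmform, ← hcn]; exact hlower
  have h2 : (Fintype.card V : ℝ) * N ≤ μ * N := by linarith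
  exact le_of_mul_le_mul_right (by linarith) hNpos
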